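/- Let g : (0,∞) → [0,∞) be a continuous log-convex function and let ν be a Borel measure on (0,∞). Suppose h(x) := ∫_{(0,∞)} g(x·y) dν(y) is finite for every x > 0. Then h is continuous and log-convex on (0,∞). -/

import Mathlib

open MeasureTheory Set

/-- Global log-convexity from the local (step `< 1`) hypothesis, by dyadic doubling. -/
lemma globalLC_aux (g : ℝ → ℝ)
    (hg_nonneg : ∀ x : ℝ, 0 < x → 0 ≤ g x)
    (hg_lc : ∀ x : ℝ, 0 < x → ∀ y ∈ Ioo (0 : ℝ) 1,
      (g (x + y)) ^ 2 ≤ g x * g (x + 2 * y)) :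
    ∀ x d : ℝ, 0 < x → 0 < d → g (x + d) ^ 2 ≤ g x * g (x + 2 * d) := by
  have main : ∀ n : ℕ, ∀ x d : ℝ, 0 < x → 0 < d → d < 2 ^ n →
      g (x + d) ^ 2 ≤ g x * g (x + 2 * d) := by
    intro n
    induction n with
    | zero =>
      intro x d hx hd hlt
      exact hg_lc x hx d ⟨hd, by simpa using hlt⟩
    | succ n ih =>
      intro x d hx hd hlt
      by_cases h0 : g (x + d) = 0
      · rw [h0]
        have := mul_nonneg (hg_nonneg x hx) (hg_nonneg (x + 2 * d) (by linarith))
        simpa using this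
      have hd2 : 0 < d / 2 := by linarith
      have hlt2 : d / 2 < 2 ^ n := by
        rw [pow_succ] at hlt; linarith
      have h1 := ih x (d / 2) hx hd2 hlt2
      have h2 := ih (x + d / 2) (d / 2) (by linarith) hd2 hlt2
      have h3 := ih (x + d) (d / 2) (by linarith) hd2 hlt2
      have e1 : x + 2 * (d / 2) = x + d := by ring
      have e2 : x + d / 2 + d / 2 = x + d := by ring
      have e2' : x + d / 2 + 2 * (d / 2) = x + d + d / 2 := by ring
      have e3 : x + d + 2 * (d / 2) = x + 2 * d := by ring
      rw [e1] at h1; rw [e2, e2'] at h2; rw [e3] at h3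
      have hC : 0 < g (x + d) :=
        lt_of_le_of_ne (hg_nonneg _ (by linarith)) (Ne.symm h0)
      have hB : 0 ≤ g (x + d / 2) := hg_nonneg _ (by linarith)
      have hD : 0 ≤ g (x + d + d / 2) := hg_nonneg _ (by linarith)
      have hA : 0 ≤ g x := hg_nonneg _ hx
      have hE : 0 ≤ g (x + 2 * d) := hg_nonneg _ (by linarith)
      have h23 : (g (x + d) ^ 2) ^ 2 ≤ (g (x + d / 2) * g (x + d + d / 2)) ^ 2 :=
        pow_le_pow_left₀ (sq_nonneg _) h2 2
      have h13 : g (x + d / 2) ^ 2 * g (x + d + d / 2) ^ 2 ≤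
          (g x * g (x + d)) * (g (x + d) * g (x + 2 * d)) :=
        mul_le_mul h1 h3 (sq_nonneg _) (mul_nonneg hA hC.le)
      rw [mul_pow] at h23
      exact le_of_mul_le_mul_right
        (by nlinarith : g (x + d) ^ 2 * g (x + d) ^ 2 ≤ (g x * g (x + 2 * d)) * g (x + d) ^ 2)
        (by positivity : (0:ℝ) < g (x + d) ^ 2)
  intro x d hx hd
  obtain ⟨n, hn⟩ := pow_unbounded_of_one_lt d (by norm_num : (1:ℝ) < 2)
  exact main n x d hx hd hn

/-- On a compact subinterval of `(0,∞)`, `g` is bounded by the max of its endpoint values. -/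
lemma maxBound_aux (g : ℝ → ℝ)
    (hg_cont : ContinuousOn g (Ioi 0))
    (hg_nonneg : ∀ x : ℝ, 0 < x → 0 ≤ g x)
    (hg_lc : ∀ x : ℝ, 0 < x → ∀ y ∈ Ioo (0 : ℝ) 1,
      (g (x + y)) ^ 2 ≤ g x * g (x + 2 * y)) :
    ∀ a b t : ℝ, 0 < a → a ≤ b → t ∈ Icc a b → g t ≤ max (g a) (g b) := by
  have key := globalLC_aux g hg_nonneg hg_lc
  intro a b t ha hab ht
  have hsub : Icc a b ⊆ Ioi 0 := fun s hs => lt_of_lt_of_le ha hs.1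
  obtain ⟨c, hc, hcmax⟩ := isCompact_Icc.exists_isMaxOn (nonempty_Icc.mpr hab)
    (hg_cont.mono hsub)
  have hgt : g t ≤ g c := hcmax ht
  have hMnonneg : 0 ≤ g c := hg_nonneg c (hsub hc)
  rcases eq_or_lt_of_le hc.1 with h1 | h1
  · exact hgt.trans (le_max_of_le_left (le_of_eq (by rw [h1])))
  rcases eq_or_lt_of_le hc.2 with h2 | h2
  · exact hgt.trans (le_max_of_le_right (le_of_eq (by rw [h2])))
  -- interior maximum
  rcases eq_or_lt_of_le hMnonneg with hM0 | hM0
  · exact hgt.trans (le_max_of_le_left (hM0.symm ▸ hg_nonneg a ha))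
  refine hgt.trans ?_
  rcases le_total (c - a) (b - c) with hd | hd
  · -- d = c - a, left endpoint hit
    have hkey := key a (c - a) ha (by linarith)
    have e1 : a + (c - a) = c := by ring
    have e2 : a + 2 * (c - a) = c + (c - a) := by ring
    rw [e1, e2] at hkey
    have hmem : c + (c - a) ∈ Icc a b := ⟨by linarith, by linarith⟩
    have hle : g (c + (c - a)) ≤ g c := hcmax hmem
    have : g c ≤ g a := by
      have h' : g c * g c ≤ g a * g c := by
        calc g c * g c = g c ^ 2 := by ring
        _ ≤ g a * g (c + (c - a)) := hkey
        _ ≤ g a * g c := mul_le_mul_of_nonneg_left hle (hg_nonneg a ha)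
      exact le_of_mul_le_mul_right h' hM0
    exact le_max_of_le_left this
  · -- d = b - c, right endpoint hit
    have hkey := key (c - (b - c)) (b - c) (by linarith) (by linarith)
    have e1 : c - (b - c) + (b - c) = c := by ring
    have e2 : c - (b - c) + 2 * (b - c) = b := by ring
    rw [e1, e2] at hkey
    have hmem : c - (b - c) ∈ Icc a b := ⟨by linarith, by linarith⟩
    have hle : g (c - (b - c)) ≤ g c := hcmax hmem
    have : g c ≤ g b := by
      have h' : g c * g c ≤ g b * g c := by
        calc g c * g c = g c ^ 2 := by ring
        _ ≤ g (c - (b - c)) * g b := hkey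
        _ ≤ g c * g b := mul_le_mul_of_nonneg_right hle (hg_nonneg b (by linarith))
        _ = g b * g c := by ring
      exact le_of_mul_le_mul_right h' hM0
    exact le_max_of_le_right this

theorem integral_scale_logConvex (g : ℝ → ℝ) (ν : Measure ℝ)
    (hg_cont : ContinuousOn g (Ioi 0))
    (hg_nonneg : ∀ x : ℝ, 0 < x → 0 ≤ g x)
    (hg_lc : ∀ x : ℝ, 0 < x → ∀ y ∈ Ioo (0 : ℝ) 1,
      (g (x + y)) ^ 2 ≤ g x * g (x + 2 * y))
    (hint : ∀ x : ℝ, 0 < x → IntegrableOn (fun y : ℝ => g (x * y)) (Ioi 0) ν) :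
    ContinuousOn (fun x : ℝ => ∫ y in Ioi (0 : ℝ), g (x * y) ∂ν) (Ioi 0) ∧
      ∀ x : ℝ, 0 < x → ∀ y ∈ Ioo (0 : ℝ) 1,
        (∫ z in Ioi (0 : ℝ), g ((x + y) * z) ∂ν) ^ 2 ≤
          (∫ z in Ioi (0 : ℝ), g (x * z) ∂ν) * ∫ z in Ioi (0 : ℝ), g ((x + 2 * y) * z) ∂ν := by
  have key := globalLC_aux g hg_nonneg hg_lc
  have maxB := maxBound_aux g hg_cont hg_nonneg hg_lc
  constructor
  · -- continuity
    intro x₀ hx₀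
    have hx₀' : (0:ℝ) < x₀ := hx₀
    refine ContinuousAt.continuousWithinAt ?_
    refine continuousAt_of_dominated (bound := fun y => g (x₀ / 2 * y) + g (2 * x₀ * y))
      ?_ ?_ ?_ ?_
    · filter_upwards [Ioi_mem_nhds hx₀'] with x hx
      exact (hint x hx).aestronglyMeasurable
    · have hmem : Ioo (x₀ / 2) (2 * x₀) ∈ nhds x₀ :=
        Ioo_mem_nhds (by linarith) (by linarith)
      filter_upwards [hmem] with x hx
      filter_upwards [ae_restrict_mem measurableSet_Ioi] with y hy
      have hy' : (0:ℝ) < y := hy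
      have h1 : x₀ / 2 * y ≤ x * y := by nlinarith [hx.1]
      have h2 : x * y ≤ 2 * x₀ * y := by nlinarith [hx.2]
      have hpos : 0 < x₀ / 2 * y := by positivity
      have hb := maxB (x₀ / 2 * y) (2 * x₀ * y) (x * y) hpos (by linarith) ⟨h1, h2⟩
      have hnn : 0 ≤ g (x * y) := hg_nonneg _ (by linarith)
      rw [Real.norm_of_nonneg hnn]
      have ha' : 0 ≤ g (x₀ / 2 * y) := hg_nonneg _ hpos
      have hb' : 0 ≤ g (2 * x₀ * y) := hg_nonneg _ (by linarith)
      rcases max_cases (g (x₀ / 2 * y)) (g (2 * x₀ * y)) with ⟨he, _⟩ | ⟨he, _⟩ <;>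
        rw [he] at hb <;> linarith
    · exact (hint (x₀ / 2) (by linarith)).add (hint (2 * x₀) (by linarith))
    · filter_upwards [ae_restrict_mem measurableSet_Ioi] with y hy
      have hy' : (0:ℝ) < y := hy
      have h1 : ContinuousAt g (x₀ * y) :=
        hg_cont.continuousAt (Ioi_mem_nhds (by positivity))
      have h2 : ContinuousAt (fun x : ℝ => x * y) x₀ := continuousAt_id.mul continuousAt_const
      exact ContinuousAt.comp (g := g) (f := fun x : ℝ => x * y) h1 h2
  · -- log-convexity via Cauchy–Schwarz
    intro x hx y hy
    have hy0 : (0:ℝ) < y := hy.1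
    set μ := ν.restrict (Ioi (0:ℝ)) with hμ
    have hu : Integrable (fun z => g (x * z)) μ := hint x hx
    have hv : Integrable (fun z => g ((x + 2 * y) * z)) μ := hint _ (by linarith)
    have hw : Integrable (fun z => g ((x + y) * z)) μ := hint _ (by linarith)
    -- pointwise a.e. facts on Ioi 0
    have hae := ae_restrict_mem (μ := ν) (measurableSet_Ioi (a := (0:ℝ)))
    have hptw : ∀ z : ℝ, z ∈ Ioi (0:ℝ) →
        g ((x + y) * z) ≤ Real.sqrt (g (x * z)) * Real.sqrt (g ((x + 2 * y) * z)) := by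
      intro z hz
      have hz' : (0:ℝ) < z := hz
      have hk := key (x * z) (y * z) (by positivity) (by positivity)
      have e1 : x * z + y * z = (x + y) * z := by ring
      have e2 : x * z + 2 * (y * z) = (x + 2 * y) * z := by ring
      rw [e1, e2] at hk
      have hwnn : 0 ≤ g ((x + y) * z) := hg_nonneg _ (by positivity)
      have hunn : 0 ≤ g (x * z) := hg_nonneg _ (by positivity)
      have hvnn : 0 ≤ g ((x + 2 * y) * z) := hg_nonneg _ (by positivity)
      rw [← Real.sqrt_mul hunn]
      exact (Real.le_sqrt hwnn (mul_nonneg hunn hvnn)).mpr hk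
    -- measurability of the sqrt product
    have hsm : AEStronglyMeasurable
        (fun z => Real.sqrt (g (x * z)) * Real.sqrt (g ((x + 2 * y) * z))) μ :=
      (Real.continuous_sqrt.comp_aestronglyMeasurable hu.aestronglyMeasurable).mul
        (Real.continuous_sqrt.comp_aestronglyMeasurable hv.aestronglyMeasurable)
    -- integrability of the sqrt product
    have hsint : Integrable
        (fun z => Real.sqrt (g (x * z)) * Real.sqrt (g ((x + 2 * y) * z))) μ := by
      refine (hu.add hv).mono' hsm ?_
      filter_upwards [hae] with z hz
      have hz' : (0:ℝ) < z := hz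
      have hunn : 0 ≤ g (x * z) := hg_nonneg _ (by positivity)
      have hvnn : 0 ≤ g ((x + 2 * y) * z) := hg_nonneg _ (by positivity)
      rw [Real.norm_of_nonneg (mul_nonneg (Real.sqrt_nonneg _) (Real.sqrt_nonneg _))]
      simp only [Pi.add_apply]
      nlinarith [sq_nonneg (Real.sqrt (g (x * z)) - Real.sqrt (g ((x + 2 * y) * z))),
        Real.sq_sqrt hunn, Real.sq_sqrt hvnn]
    -- step 1: ∫ w ≤ ∫ √u√v
    have step1 : (∫ z, g ((x + y) * z) ∂μ) ≤
        ∫ z, Real.sqrt (g (x * z)) * Real.sqrt (g ((x + 2 * y) * z)) ∂μ := by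
      refine integral_mono_ae hw hsint ?_
      filter_upwards [hae] with z hz
      exact hptw z hz
    -- step 2: Hölder with p = q = 2
    have hpq : Real.HolderConjugate 2 2 := Real.HolderConjugate.two_two
    have hof : (ENNReal.ofReal (2:ℝ)) = 2 := by
      simp [ENNReal.ofReal_ofNat]
    have hsqu : (fun z => Real.sqrt (g (x * z)) ^ (2:ℝ)) =ᵐ[μ] fun z => g (x * z) := by
      filter_upwards [hae] with z hz
      have hz' : (0:ℝ) < z := hz
      rw [Real.rpow_two, Real.sq_sqrt (hg_nonneg _ (by positivity))]
    have hsqv : (fun z => Real.sqrt (g ((x + 2 * y) * z)) ^ (2:ℝ)) =ᵐ[μ]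
        fun z => g ((x + 2 * y) * z) := by
      filter_upwards [hae] with z hz
      have hz' : (0:ℝ) < z := hz
      rw [Real.rpow_two, Real.sq_sqrt (hg_nonneg _ (by positivity))]
    have hmu : MemLp (fun z => Real.sqrt (g (x * z))) (ENNReal.ofReal 2) μ := by
      rw [hof]
      refine (memLp_two_iff_integrable_sq
        (Real.continuous_sqrt.comp_aestronglyMeasurable hu.aestronglyMeasurable)).mpr ?_
      refine hu.congr ?_
      filter_upwards [hae] with z hz
      exact (Real.sq_sqrt (hg_nonneg _ (mul_pos hx hz))).symm
    have hmv : MemLp (fun z => Real.sqrt (g ((x + 2 * y) * z))) (ENNReal.ofReal 2) μ := by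
      rw [hof]
      refine (memLp_two_iff_integrable_sq
        (Real.continuous_sqrt.comp_aestronglyMeasurable hv.aestronglyMeasurable)).mpr ?_
      refine hv.congr ?_
      filter_upwards [hae] with z hz
      exact (Real.sq_sqrt (hg_nonneg _ (mul_pos (by linarith [hy0] : (0:ℝ) < x + 2 * y) hz))).symm
    have step2 := integral_mul_le_Lp_mul_Lq_of_nonneg hpq
      (f := fun z => Real.sqrt (g (x * z)))
      (g := fun z => Real.sqrt (g ((x + 2 * y) * z)))
      (Filter.Eventually.of_forall fun z => Real.sqrt_nonneg _)
      (Filter.Eventually.of_forall fun z => Real.sqrt_nonneg _) hmu hmv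
    rw [integral_congr_ae hsqu, integral_congr_ae hsqv] at step2
    -- combine
    have hIu : 0 ≤ ∫ z, g (x * z) ∂μ := by
      refine integral_nonneg_of_ae ?_
      filter_upwards [hae] with z hz
      exact hg_nonneg _ (mul_pos hx hz)
    have hIv : 0 ≤ ∫ z, g ((x + 2 * y) * z) ∂μ := by
      refine integral_nonneg_of_ae ?_
      filter_upwards [hae] with z hz
      exact hg_nonneg _ (mul_pos (by linarith) hz)
    have hIw : 0 ≤ ∫ z, g ((x + y) * z) ∂μ := by
      refine integral_nonneg_of_ae ?_
      filter_upwards [hae] with z hz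
      exact hg_nonneg _ (mul_pos (by linarith) hz)
    have hfinal : (∫ z, g ((x + y) * z) ∂μ) ^ 2 ≤
        ((∫ z, g (x * z) ∂μ) ^ ((1:ℝ)/2) * (∫ z, g ((x + 2 * y) * z) ∂μ) ^ ((1:ℝ)/2)) ^ 2 :=
      pow_le_pow_left₀ hIw (step1.trans step2) 2
    calc (∫ z, g ((x + y) * z) ∂μ) ^ 2
        ≤ ((∫ z, g (x * z) ∂μ) ^ ((1:ℝ)/2) * (∫ z, g ((x + 2 * y) * z) ∂μ) ^ ((1:ℝ)/2)) ^ 2 :=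
          hfinal
      _ = (∫ z, g (x * z) ∂μ) * (∫ z, g ((x + 2 * y) * z) ∂μ) := by
          rw [mul_pow, ← Real.rpow_natCast ((∫ z, g (x * z) ∂μ) ^ ((1:ℝ)/2)) 2,
            ← Real.rpow_natCast ((∫ z, g ((x + 2 * y) * z) ∂μ) ^ ((1:ℝ)/2)) 2,
            ← Real.rpow_mul hIu, ← Real.rpow_mul hIv]
          norm_num
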